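/- Let S_∞ = ∑_{k=1}^∞ 2^{-k} Z_k with (Z_k) i.i.d. Exp(1), and for 0 ≤ η ≤ 1 let Q_η be the distribution of ⌊−log₂ S_∞ + η⌋. Then for every ρ < (log 2)/2, Q_η([x, ∞)) = o(exp(−ρ x²)) as x → ∞. -/

import Mathlib

open MeasureTheory ProbabilityTheory Filter

open Real in
lemma exp_tail_aux {Ω : Type*} [MeasureSpace Ω] [IsProbabilityMeasure (ℙ : Measure Ω)]
    (W : Ω → ℝ) (hm : Measurable W) (he : Measure.map W ℙ = expMeasure 1)
    (c : ℝ) (hc : 0 ≤ c) : ℙ (W ⁻¹' Set.Iic c) ≤ ENNReal.ofReal c := by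
  haveI : IsProbabilityMeasure (expMeasure 1) := isProbabilityMeasure_expMeasure one_pos
  rw [← Measure.map_apply hm measurableSet_Iic, he, ← ProbabilityTheory.ofReal_cdf]
  have hcdf := cdf_expMeasure_eq one_pos c
  rw [hcdf, if_pos hc]
  refine ENNReal.ofReal_le_ofReal ?_
  have := Real.add_one_le_exp (-(1 * c))
  linarith

lemma neg_null_aux {Ω : Type*} [MeasureSpace Ω] [IsProbabilityMeasure (ℙ : Measure Ω)]
    (W : Ω → ℝ) (hm : Measurable W) (he : Measure.map W ℙ = expMeasure 1) :
    ℙ {ω | W ω < 0} = 0 := by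
  have h : {ω | W ω < 0} ⊆ W ⁻¹' Set.Iic 0 := fun ω hω => show W ω ≤ 0 from le_of_lt hω
  have := (measure_mono h).trans (exp_tail_aux W hm he 0 le_rfl)
  simpa using this

lemma sum_aux (n : ℕ) (x : ℝ) :
    ∑ k ∈ Finset.range n, ((k:ℝ) + 2 - x) = (n:ℝ) * ((n:ℝ) - 1) / 2 + (n:ℝ) * (2 - x) := by
  induction n with
  | zero => simp
  | succ m ih =>
    rw [Finset.sum_range_succ, ih]
    push_cast
    ring

/-- For `S_∞ = ∑_{k=1}^∞ 2^{-k} Z_k` with `(Z k)` i.i.d. `Exp(1)` and `Q_η` the law of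
`⌊−log₂ S_∞ + η⌋`, one has `Q_η([x,∞)) = o(exp(−ρ x²))` as `x → ∞` for every
`ρ < (log 2)/2`. -/
theorem stmt11 {Ω : Type*} [MeasureSpace Ω] [IsProbabilityMeasure (ℙ : Measure Ω)]
    (Z : ℕ → Ω → ℝ) (hmeas : ∀ k, Measurable (Z k))
    (hindep : iIndepFun Z ℙ)
    (hexp : ∀ k, Measure.map (Z k) ℙ = expMeasure 1)
    (η : ℝ) (hη0 : 0 ≤ η) (hη1 : η ≤ 1) (ρ : ℝ) (hρ : ρ < Real.log 2 / 2) :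
    (fun x : ℝ =>
        (ℙ {ω | x ≤ (⌊-Real.logb 2 (∑' k : ℕ, (2 : ℝ) ^ (-((k : ℤ) + 1)) * Z k ω) + η⌋ : ℝ)}).toReal)
      =o[atTop] fun x : ℝ => Real.exp (-ρ * x ^ 2) := by
  set E : ℝ → Set Ω := fun x =>
    {ω | x ≤ (⌊-Real.logb 2 (∑' k : ℕ, (2 : ℝ) ^ (-((k : ℤ) + 1)) * Z k ω) + η⌋ : ℝ)} with hE
  -- the key tail bound
  have key : ∀ x : ℝ, 2 ≤ x →
      (ℙ (E x)).toReal ≤ Real.exp (Real.log 2 * (-x ^ 2 / 2 + 5 * x / 2)) := by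
    intro x hx
    set n : ℕ := (⌊x⌋).toNat with hn
    have hfl : (0:ℤ) ≤ ⌊x⌋ := Int.floor_nonneg.mpr (by linarith)
    have hnn : (n : ℝ) = ((⌊x⌋ : ℤ) : ℝ) := by
      rw [hn]; exact_mod_cast congrArg (fun z : ℤ => (z : ℝ)) (Int.toNat_of_nonneg hfl)
    have hnx : (n : ℝ) ≤ x := by rw [hnn]; exact Int.floor_le x
    have hxn : x - 1 ≤ (n : ℝ) := by
      have h1 := Int.lt_floor_add_one x
      rw [← hnn] at h1
      linarith
    -- inclusion
    have hsub : E x ⊆ (⋃ k, {ω | Z k ω < 0}) ∪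
        ⋂ k ∈ Finset.range n, Z k ⁻¹' Set.Iic ((2:ℝ) ^ ((k:ℝ) + 2 - x)) := by
      intro ω hω
      by_cases hneg : ∃ k, Z k ω < 0
      · exact Or.inl (Set.mem_iUnion.mpr ⟨hneg.choose, hneg.choose_spec⟩)
      · push_neg at hneg
        right
        set S : ℝ := ∑' k : ℕ, (2 : ℝ) ^ (-((k : ℤ) + 1)) * Z k ω with hS
        have hω' : x ≤ -Real.logb 2 S + η :=
          le_trans hω (Int.floor_le _)
        have hlogb : Real.logb 2 S ≤ η - x := by linarith
        have hterm0 : ∀ k : ℕ, 0 ≤ (2 : ℝ) ^ (-((k : ℤ) + 1)) * Z k ω := fun k =>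
          mul_nonneg (by positivity) (hneg k)
        have hS0 : 0 ≤ S := tsum_nonneg hterm0
        have hSpos : 0 < S := by
          rcases hS0.eq_or_lt with h | h
          · rw [← h] at hlogb
            rw [Real.logb_zero] at hlogb
            linarith
          · exact h
        have hsum : Summable (fun k : ℕ => (2 : ℝ) ^ (-((k : ℤ) + 1)) * Z k ω) := by
          by_contra h
          rw [hS, tsum_eq_zero_of_not_summable h] at hSpos
          exact lt_irrefl 0 hSpos
        have hSle : S ≤ (2:ℝ) ^ (η - x) :=
          (Real.logb_le_iff_le_rpow one_lt_two hSpos).mp hlogb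
        refine Set.mem_iInter₂.mpr fun k _ => ?_
        have hle : (2 : ℝ) ^ (-((k : ℤ) + 1)) * Z k ω ≤ S := Summable.le_tsum hsum k fun j _ => hterm0 j
        have hpow : (0:ℝ) < (2 : ℝ) ^ (-((k : ℤ) + 1)) := by positivity
        have hZk : Z k ω ≤ (2:ℝ) ^ ((k : ℤ) + 1) * (2:ℝ) ^ (η - x) := by
          have h1 : Z k ω = (2:ℝ) ^ ((k : ℤ) + 1) * ((2 : ℝ) ^ (-((k : ℤ) + 1)) * Z k ω) := by
            rw [← mul_assoc, ← zpow_add₀ (two_ne_zero), add_neg_cancel, zpow_zero, one_mul]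
          rw [h1]
          exact mul_le_mul_of_nonneg_left (hle.trans hSle) (by positivity)
        have hc : (2:ℝ) ^ ((k : ℤ) + 1) * (2:ℝ) ^ (η - x) ≤ (2:ℝ) ^ ((k:ℝ) + 2 - x) := by
          have h1 : (2:ℝ) ^ ((k : ℤ) + 1) = (2:ℝ) ^ (((k:ℝ) + 1) : ℝ) := by
            rw [← Real.rpow_intCast]
            push_cast
            ring_nf
          rw [h1, ← Real.rpow_add two_pos]
          exact Real.rpow_le_rpow_of_exponent_le one_le_two (by linarith)
        exact le_trans hZk hc
    -- measure bound
    have hB : ℙ (E x) ≤ ENNReal.ofReal (Real.exp (Real.log 2 *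
        ∑ k ∈ Finset.range n, ((k:ℝ) + 2 - x))) := by
      calc ℙ (E x) ≤ ℙ ((⋃ k, {ω | Z k ω < 0}) ∪
            ⋂ k ∈ Finset.range n, Z k ⁻¹' Set.Iic ((2:ℝ) ^ ((k:ℝ) + 2 - x))) :=
              measure_mono hsub
        _ ≤ ℙ (⋃ k, {ω | Z k ω < 0}) +
            ℙ (⋂ k ∈ Finset.range n, Z k ⁻¹' Set.Iic ((2:ℝ) ^ ((k:ℝ) + 2 - x))) :=
              measure_union_le _ _
        _ = ℙ (⋂ k ∈ Finset.range n, Z k ⁻¹' Set.Iic ((2:ℝ) ^ ((k:ℝ) + 2 - x))) := by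
              rw [measure_iUnion_null fun k => neg_null_aux (Z k) (hmeas k) (hexp k), zero_add]
        _ = ∏ k ∈ Finset.range n, ℙ (Z k ⁻¹' Set.Iic ((2:ℝ) ^ ((k:ℝ) + 2 - x))) :=
              hindep.meas_biInter fun k _ => ⟨Set.Iic _, measurableSet_Iic, rfl⟩
        _ ≤ ∏ k ∈ Finset.range n, ENNReal.ofReal ((2:ℝ) ^ ((k:ℝ) + 2 - x)) :=
              Finset.prod_le_prod' fun k _ =>
                exp_tail_aux (Z k) (hmeas k) (hexp k) _ (by positivity)
        _ = ENNReal.ofReal (∏ k ∈ Finset.range n, (2:ℝ) ^ ((k:ℝ) + 2 - x)) :=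
              (ENNReal.ofReal_prod_of_nonneg fun k _ => by positivity).symm
        _ = ENNReal.ofReal (Real.exp (Real.log 2 * ∑ k ∈ Finset.range n, ((k:ℝ) + 2 - x))) := by
              congr 1
              rw [Finset.mul_sum, Real.exp_sum]
              exact Finset.prod_congr rfl fun k _ => by
                rw [Real.rpow_def_of_pos two_pos]
        _ = _ := rfl
    have hT : ∑ k ∈ Finset.range n, ((k:ℝ) + 2 - x) ≤ -x ^ 2 / 2 + 5 * x / 2 := by
      rw [sum_aux n x]
      nlinarith [sq_nonneg ((n:ℝ) - x + 1), sq_nonneg ((n:ℝ) - x)]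
    have := ENNReal.toReal_le_of_le_ofReal (Real.exp_nonneg _) hB
    refine this.trans (Real.exp_le_exp.mpr ?_)
    exact mul_le_mul_of_nonneg_left hT (Real.log_nonneg one_le_two)
  -- asymptotics
  have hg : ∀ x : ℝ, Real.exp (-ρ * x ^ 2) ≠ 0 := fun x => (Real.exp_pos _).ne'
  rw [Asymptotics.isLittleO_iff_tendsto fun x hx => absurd hx (hg x)]
  have hub : Tendsto (fun x : ℝ =>
      Real.exp (Real.log 2 * (-x ^ 2 / 2 + 5 * x / 2)) / Real.exp (-ρ * x ^ 2)) atTop (nhds 0) := by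
    have heq : ∀ x : ℝ, Real.exp (Real.log 2 * (-x ^ 2 / 2 + 5 * x / 2)) / Real.exp (-ρ * x ^ 2)
        = Real.exp (x * ((ρ - Real.log 2 / 2) * x + 5 * Real.log 2 / 2)) := by
      intro x
      rw [← Real.exp_sub]
      ring_nf
    simp only [heq]
    refine Real.tendsto_exp_atBot.comp ?_
    exact Tendsto.atTop_mul_atBot₀ tendsto_id
      (tendsto_atBot_add_const_right _ _
        ((tendsto_id.const_mul_atTop_of_neg (by linarith)).comp tendsto_id))
  refine tendsto_of_tendsto_of_tendsto_of_le_of_le' tendsto_const_nhds hub ?_ ?_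
  · exact Eventually.of_forall fun x => div_nonneg ENNReal.toReal_nonneg (Real.exp_nonneg _)
  · filter_upwards [eventually_ge_atTop (2:ℝ)] with x hx
    gcongr
    exact key x hx
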